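/- In the single-score MNL market the demand of each school is strictly decreasing in its own cutoff: since the diagonal entries A_{cc} = −γ_c/(Σ_{k=1}^{c} γ_k) of the demand matrix are strictly negative, for sorted cutoff vectors p and p′ differing only in coordinate c with p′_c > p_c (and both still sorted), D_c(p′) < D_c(p). -/
import Mathlib


open Finset

/-- Cutoff of the next school, extended with `p_{n+1} = 1`. -/
noncomputable def nextCutoff {n : ℕ} (p : Fin n → ℝ) (d : Fin n) : ℝ :=
  if h : (d : ℕ) + 1 < n then p ⟨(d : ℕ) + 1, h⟩ else 1

/-- Single-score MNL demand at sorted cutoffs. -/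
noncomputable def mnlDemand {n : ℕ} (γ p : Fin n → ℝ) (c : Fin n) : ℝ :=
  ∑ d ∈ Ici c, (γ c / ∑ i ∈ Iic d, γ i) * (nextCutoff p d - p d)

/-- Each school's demand is strictly decreasing in its own cutoff: for sorted
cutoff vectors `p`, `p'` differing only in coordinate `c` with `p' c > p c`,
`D_c(p') < D_c(p)`. -/
theorem mnlDemand_strict_anti_own_cutoff {n : ℕ} (γ : Fin n → ℝ)
    (hγ : ∀ i, 0 < γ i) (p p' : Fin n → ℝ)
    (hp : Monotone p) (hp' : Monotone p')
    (hp0 : ∀ i, p i ∈ Set.Icc (0 : ℝ) 1) (hp0' : ∀ i, p' i ∈ Set.Icc (0 : ℝ) 1)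
    (c : Fin n) (hdiff : ∀ i, i ≠ c → p i = p' i) (hlt : p c < p' c) :
    mnlDemand γ p' c < mnlDemand γ p c := by
  have hnext : ∀ d : Fin n, c ≤ d → nextCutoff p' d = nextCutoff p d := by
    intro d hd
    unfold nextCutoff
    split
    · rename_i h
      have hc : (⟨(d : ℕ) + 1, h⟩ : Fin n) ≠ c := by
        intro hcc
        have h1 : (c : ℕ) = (d : ℕ) + 1 := by rw [← hcc]
        have h2 : (c : ℕ) ≤ (d : ℕ) := hd
        omega
      exact (hdiff _ hc).symm
    · rfl
  have hSpos : ∀ d : Fin n, (0 : ℝ) < ∑ i ∈ Iic d, γ i :=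
    fun d => Finset.sum_pos (fun i _ => hγ i) ⟨d, Finset.mem_Iic.2 le_rfl⟩
  unfold mnlDemand
  apply Finset.sum_lt_sum
  · intro d hd
    rw [hnext d (Finset.mem_Ici.1 hd)]
    by_cases hdc : d = c
    · subst hdc
      have := hlt
      have hpos : 0 < γ d / ∑ i ∈ Iic d, γ i := div_pos (hγ d) (hSpos d)
      nlinarith
    · rw [hdiff d hdc]
  · refine ⟨c, Finset.mem_Ici.2 le_rfl, ?_⟩
    rw [hnext c le_rfl]
    have hpos : 0 < γ c / ∑ i ∈ Iic c, γ i := div_pos (hγ c) (hSpos c)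
    nlinarith
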